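/- (Eigenvalue bound for anchored games) Let $G$ be a $k$-player game and let $G_\bot$ be its $\alpha$-anchored version with $0 < \alpha < 1/2$. Then the second-smallest Laplacian eigenvalue of the $(k-1)$-connection graph $H$ of $G_\bot$ satisfies $\lambda(H) \ge \alpha^k/(8k)$. -/

import Mathlib

open Finset

noncomputable section

/-- Marginal probability of `X^{-t} = x^{-t}` under `μ`. -/
def margMinus {k : ℕ} {X : Fin k → Type*} [∀ t, Fintype (X t)] [∀ t, DecidableEq (X t)]
    (μ : (∀ t, X t) → ℝ) (t : Fin k) (x : ∀ t, X t) : ℝ :=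
  ∑ a : X t, μ (Function.update x t a)

/-- Conditional probability of `X^t = a` given `X^{-t} = x^{-t}` (zero if the marginal
vanishes). -/
def condProb {k : ℕ} {X : Fin k → Type*} [∀ t, Fintype (X t)] [∀ t, DecidableEq (X t)]
    (μ : (∀ t, X t) → ℝ) (t : Fin k) (x : ∀ t, X t) (a : X t) : ℝ :=
  if 0 < margMinus μ t x then μ (Function.update x t a) / margMinus μ t x else 0

open Classical in
/-- The weight function of the `(k-1)`-connection graph. -/
def connRho {k : ℕ} {X : Fin k → Type*} [∀ t, Fintype (X t)] [∀ t, DecidableEq (X t)]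
    (μ : (∀ t, X t) → ℝ) (x x' : ∀ t, X t) : ℝ :=
  if x = x' then
    (k : ℝ)⁻¹ * μ x * ∑ t, condProb μ t x (x t)
  else
    (k : ℝ)⁻¹ * ∑ t, (if ∀ s, s ≠ t → x s = x' s then
      margMinus μ t x * condProb μ t x (x t) * condProb μ t x (x' t) else 0)


noncomputable section

variable {V : Type*} [Fintype V]

/-- Vertex weight `ρ(u) = ∑_v ρ(u,v)`. -/
def vertexWeight (ρ : V → V → ℝ) (u : V) : ℝ := ∑ v, ρ u v

/-- The weighted average `ḡ = ∑_u ρ(u) g(u)` of an embedding. -/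
def gbar (ρ : V → V → ℝ) {r : ℕ} (g : V → EuclideanSpace ℝ (Fin r)) :
    EuclideanSpace ℝ (Fin r) :=
  ∑ u, vertexWeight ρ u • g u

/-- The Dirichlet energy `∑_{u,v} ρ(u,v) ‖g(u) - g(v)‖²`. -/
def dirichletEnergy (ρ : V → V → ℝ) {r : ℕ} (g : V → EuclideanSpace ℝ (Fin r)) : ℝ :=
  ∑ u, ∑ v, ρ u v * ‖g u - g v‖ ^ 2

/-- The variance `∑_u ρ(u) ‖g(u) - ḡ‖²`. -/
def varianceH (ρ : V → V → ℝ) {r : ℕ} (g : V → EuclideanSpace ℝ (Fin r)) : ℝ :=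
  ∑ u, vertexWeight ρ u * ‖g u - gbar ρ g‖ ^ 2

/-- The variational formula for the second-smallest eigenvalue of the normalized Laplacian:
`λ(H) = inf_g (Dirichlet energy of g) / (variance of g)` over nonconstant vector-valued
embeddings `g` of the vertices (in any dimension). -/
def lamH (ρ : V → V → ℝ) : ℝ :=
  sInf { q : ℝ | ∃ r : ℕ, ∃ g : V → EuclideanSpace ℝ (Fin r),
    varianceH ρ g ≠ 0 ∧ q = dirichletEnergy ρ g / varianceH ρ g }

/-- The question distribution of the `α`-anchored game `G_⊥`: sample `x ∼ μ` and
independently replace each coordinate by the anchor `⊥` (modeled by `none`) with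
probability `α`. -/
def anchoredDist {k : ℕ} {X : Fin k → Type*} [∀ t, Fintype (X t)] [∀ t, DecidableEq (X t)]
    (μ : (∀ t, X t) → ℝ) (α : ℝ) (w : ∀ t, Option (X t)) : ℝ :=
  ∑ x : ∀ t, X t, μ x * ∏ t,
    (match w t with
      | none => α
      | some a => if a = x t then 1 - α else 0)

section General
variable {k : ℕ} {Y : Fin k → Type*} [∀ t, Fintype (Y t)] [∀ t, DecidableEq (Y t)]
variable {μ : (∀ t, Y t) → ℝ}

lemma margMinus_nonneg (hμ0 : ∀ x, 0 ≤ μ x) (t : Fin k) (x : ∀ t, Y t) :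
    0 ≤ margMinus μ t x :=
  Finset.sum_nonneg fun _ _ => hμ0 _

lemma mu_le_margMinus (hμ0 : ∀ x, 0 ≤ μ x) (t : Fin k) (x : ∀ t, Y t) :
    μ x ≤ margMinus μ t x := by
  have h := Finset.single_le_sum (f := fun a => μ (Function.update x t a))
    (fun a _ => hμ0 _) (Finset.mem_univ (x t))
  simp only [Function.update_eq_self] at h
  exact h

lemma mu_eq_zero_of_marg (hμ0 : ∀ x, 0 ≤ μ x) {t : Fin k} {x : ∀ t, Y t}
    (h : ¬ 0 < margMinus μ t x) : μ x = 0 :=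
  le_antisymm (le_trans (mu_le_margMinus hμ0 t x) (not_lt.1 h)) (hμ0 x)

lemma condProb_nonneg (hμ0 : ∀ x, 0 ≤ μ x) (t : Fin k) (x : ∀ t, Y t) (a : Y t) :
    0 ≤ condProb μ t x a := by
  unfold condProb; split_ifs with h
  · exact div_nonneg (hμ0 _) h.le
  · exact le_refl 0

lemma margMinus_mul_condProb (hμ0 : ∀ x, 0 ≤ μ x) (t : Fin k) (x : ∀ t, Y t) (a : Y t) :
    margMinus μ t x * condProb μ t x a = μ (Function.update x t a) := by
  unfold condProb; split_ifs with h
  · field_simp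
  · have hm : margMinus μ t x = 0 := le_antisymm (not_lt.1 h) (margMinus_nonneg hμ0 t x)
    have h1 : μ (Function.update x t a) ≤ margMinus μ t x :=
      Finset.single_le_sum (f := fun a => μ (Function.update x t a))
        (fun a _ => hμ0 _) (Finset.mem_univ a)
    have : μ (Function.update x t a) = 0 := le_antisymm (hm ▸ h1) (hμ0 _)
    rw [this, mul_zero]

lemma mu_mul_sum_condProb (hμ0 : ∀ x, 0 ≤ μ x) (t : Fin k) (x : ∀ t, Y t) :
    μ x * ∑ a, condProb μ t x a = μ x := by
  by_cases h : 0 < margMinus μ t x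
  · have : ∑ a, condProb μ t x a = 1 := by
      unfold condProb
      simp only [if_pos h]
      rw [← Finset.sum_div]
      exact div_self (ne_of_gt h)
    rw [this, mul_one]
  · rw [mu_eq_zero_of_marg hμ0 h, zero_mul]

lemma connRho_nonneg (hμ0 : ∀ x, 0 ≤ μ x) (u v : ∀ t, Y t) : 0 ≤ connRho μ u v := by
  unfold connRho; split_ifs with h
  · exact mul_nonneg (mul_nonneg (by positivity) (hμ0 u))
      (Finset.sum_nonneg fun t _ => condProb_nonneg hμ0 t u (u t))
  · refine mul_nonneg (by positivity) (Finset.sum_nonneg fun t _ => ?_)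
    split_ifs with h2
    · exact mul_nonneg (mul_nonneg (margMinus_nonneg hμ0 t u)
        (condProb_nonneg hμ0 t u (u t))) (condProb_nonneg hμ0 t u (v t))
    · exact le_refl 0

end General


section VW
variable {k : ℕ} {Y : Fin k → Type*} [∀ t, Fintype (Y t)] [∀ t, DecidableEq (Y t)]
variable {μ : (∀ t, Y t) → ℝ}

lemma vertexWeight_connRho (hk : 0 < k) (hμ0 : ∀ x, 0 ≤ μ x) (w : ∀ t, Y t) :
    vertexWeight (connRho μ) w = μ w := by
  classical
  have hkR : (k : ℝ) ≠ 0 := Nat.cast_ne_zero.2 hk.ne'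
  unfold vertexWeight
  rw [← Finset.sum_erase_add _ _ (Finset.mem_univ w)]
  have hdiag : connRho μ w w = (k : ℝ)⁻¹ * μ w * ∑ t, condProb μ t w (w t) := by
    unfold connRho; rw [if_pos rfl]
  have hoff : ∀ v ∈ Finset.univ.erase w, connRho μ w v =
      (k : ℝ)⁻¹ * ∑ t, (if ∀ s, s ≠ t → w s = v s then
        margMinus μ t w * condProb μ t w (w t) * condProb μ t w (v t) else 0) := by
    intro v hv
    unfold connRho
    rw [if_neg (Finset.ne_of_mem_erase hv).symm]
  rw [Finset.sum_congr rfl hoff, ← Finset.mul_sum, Finset.sum_comm]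
  have inner : ∀ t : Fin k,
      (∑ v ∈ Finset.univ.erase w, (if ∀ s, s ≠ t → w s = v s then
        margMinus μ t w * condProb μ t w (w t) * condProb μ t w (v t) else 0))
      = μ w - μ w * condProb μ t w (w t) := by
    intro t
    rw [← Finset.sum_filter]
    have himg : (Finset.univ.erase w).filter (fun v => ∀ s, s ≠ t → w s = v s)
        = (Finset.univ.erase (w t)).image (fun a => Function.update w t a) := by
      ext v
      simp only [Finset.mem_filter, Finset.mem_erase, Finset.mem_univ, Finset.mem_image,
        true_and, and_true]
      constructor
      · rintro ⟨hvw, hpred⟩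
        refine ⟨v t, ?_, ?_⟩
        · intro hvt
          apply hvw
          funext s
          by_cases hs : s = t
          · subst hs; exact hvt
          · exact (hpred s hs).symm
        · funext s
          by_cases hs : s = t
          · subst hs; rw [Function.update_self]
          · rw [Function.update_of_ne hs, hpred s hs]
      · rintro ⟨a, ha, rfl⟩
        constructor
        · intro h
          apply ha
          have := congrFun h t
          rwa [Function.update_self] at this
        · intro s hs
          rw [Function.update_of_ne hs]
    rw [himg, Finset.sum_image (fun a _ b _ h => Function.update_injective w t h)]
    have : ∀ a ∈ Finset.univ.erase (w t),
        margMinus μ t w * condProb μ t w (w t) * condProb μ t w (Function.update w t a t)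
        = μ w * condProb μ t w a := by
      intro a _
      rw [Function.update_self, margMinus_mul_condProb hμ0, Function.update_eq_self]
    rw [Finset.sum_congr rfl this, ← Finset.mul_sum,
      Finset.sum_erase_eq_sub (Finset.mem_univ (w t)), mul_sub,
      mu_mul_sum_condProb hμ0]
  rw [Finset.sum_congr rfl (fun t _ => inner t), hdiag]
  rw [Finset.sum_sub_distrib, Finset.sum_const, Finset.card_univ, Fintype.card_fin,
    ← Finset.mul_sum]
  field_simp
  rw [nsmul_eq_mul]; ring

end VW


def ker {k : ℕ} {X : Fin k → Type*} [∀ t, DecidableEq (X t)] (α : ℝ) (t : Fin k)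
    (c : Option (X t)) (b : X t) : ℝ :=
  match c with
  | none => α
  | some a => if a = b then 1 - α else 0

section Anch
variable {k : ℕ} {X : Fin k → Type*} [∀ t, Fintype (X t)] [∀ t, DecidableEq (X t)]
variable {μ : (∀ t, X t) → ℝ} {α : ℝ}

lemma anchored_apply (μ : (∀ t, X t) → ℝ) (α : ℝ) (w : ∀ t, Option (X t)) :
    anchoredDist μ α w = ∑ x, μ x * ∏ t, ker α t (w t) (x t) := rfl

omit [∀ t, Fintype (X t)] in
lemma ker_nonneg (h0 : 0 ≤ α) (h1 : α ≤ 1) (t : Fin k) (c : Option (X t)) (b : X t) :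
    0 ≤ ker α t c b := by
  cases c with
  | none => exact h0
  | some a =>
    show (0:ℝ) ≤ if a = b then 1 - α else 0
    split_ifs
    · linarith
    · exact le_refl 0

lemma sum_ker (t : Fin k) (b : X t) : ∑ c : Option (X t), ker α t c b = 1 := by
  rw [Fintype.sum_option]
  have : ∑ a : X t, ker α t (some a) b = 1 - α := by
    show (∑ a : X t, if a = b then 1 - α else 0) = 1 - α
    simp
  rw [this]
  show α + (1 - α) = 1
  ring

lemma anchored_nonneg (hμ0 : ∀ x, 0 ≤ μ x) (h0 : 0 ≤ α) (h1 : α ≤ 1)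
    (w : ∀ t, Option (X t)) : 0 ≤ anchoredDist μ α w := by
  rw [anchored_apply]
  exact Finset.sum_nonneg fun x _ => mul_nonneg (hμ0 x)
    (Finset.prod_nonneg fun t _ => ker_nonneg h0 h1 t (w t) (x t))

lemma anchored_sum (hμ1 : ∑ x, μ x = 1) : ∑ w, anchoredDist μ α w = 1 := by
  simp only [anchored_apply]
  rw [Finset.sum_comm]
  have : ∀ x : ∀ t, X t, ∑ w : ∀ t, Option (X t), μ x * ∏ t, ker α t (w t) (x t) = μ x := by
    intro x
    rw [← Finset.mul_sum]
    have : ∑ w : ∀ t, Option (X t), ∏ t, ker α t (w t) (x t) = 1 := by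
      have hps := Finset.prod_univ_sum (fun t : Fin k => (Finset.univ : Finset (Option (X t))))
        (fun t c => ker α t c (x t))
      rw [← Fintype.piFinset_univ, ← hps]
      exact Finset.prod_eq_one fun t _ => sum_ker t (x t)
    rw [this, mul_one]
  rw [Finset.sum_congr rfl fun x _ => this x, hμ1]

lemma anchored_bot (hμ1 : ∑ x, μ x = 1) :
    anchoredDist μ α (fun _ => none) = α ^ k := by
  rw [anchored_apply]
  have : ∀ x : ∀ t, X t, μ x * ∏ t : Fin k, ker α t none (x t) = μ x * α ^ k := by
    intro x
    congr 1
    show (∏ _t : Fin k, α) = α ^ k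
    rw [Finset.prod_const, Finset.card_univ, Fintype.card_fin]
  rw [Finset.sum_congr rfl fun x _ => this x, ← Finset.sum_mul, hμ1, one_mul]

lemma anchored_update (w : ∀ t, Option (X t)) (t : Fin k) (c : Option (X t)) :
    anchoredDist μ α (Function.update w t c)
      = ∑ x, μ x * (ker α t c (x t) * ∏ s ∈ Finset.univ.erase t, ker α s (w s) (x s)) := by
  rw [anchored_apply]
  refine Finset.sum_congr rfl fun x _ => ?_
  congr 1
  rw [← Finset.mul_prod_erase Finset.univ _ (Finset.mem_univ t), Function.update_self]
  congr 1
  exact Finset.prod_congr rfl fun s hs =>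
    by rw [Function.update_of_ne (Finset.mem_erase.1 hs).1]

lemma margMinus_anchored (t : Fin k) (w : ∀ t, Option (X t)) :
    margMinus (anchoredDist μ α) t w
      = ∑ x, μ x * ∏ s ∈ Finset.univ.erase t, ker α s (w s) (x s) := by
  unfold margMinus
  rw [Finset.sum_congr rfl fun c _ => anchored_update w t c, Finset.sum_comm]
  refine Finset.sum_congr rfl fun x _ => ?_
  rw [← Finset.mul_sum, ← Finset.sum_mul, sum_ker, one_mul]

lemma anchored_update_none (t : Fin k) (w : ∀ t, Option (X t)) :
    anchoredDist μ α (Function.update w t none)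
      = α * margMinus (anchoredDist μ α) t w := by
  rw [anchored_update, margMinus_anchored, Finset.mul_sum]
  refine Finset.sum_congr rfl fun x _ => ?_
  show μ x * (α * _) = α * (μ x * _)
  ring

end Anch


section Step
variable {k : ℕ} {X : Fin k → Type*} [∀ t, Fintype (X t)] [∀ t, DecidableEq (X t)]
variable {μ : (∀ t, X t) → ℝ} {α : ℝ}

set_option linter.unusedSectionVars false in
lemma piSplitAt_symm_update (t : Fin k) (c c' : Option (X t))
    (r : ∀ s : {s // s ≠ t}, Option (X s)) :
    Function.update ((Equiv.piSplitAt t (fun s => Option (X s))).symm (c, r)) t c'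
      = (Equiv.piSplitAt t (fun s => Option (X s))).symm (c', r) := by
  funext s
  rcases eq_or_ne s t with h | h
  · subst h
    rw [Function.update_self]
    simp [Equiv.piSplitAt]
  · rw [Function.update_of_ne h]
    simp [Equiv.piSplitAt, h]

set_option linter.unusedSectionVars false in
lemma piSplitAt_symm_same (t : Fin k) (c : Option (X t))
    (r : ∀ s : {s // s ≠ t}, Option (X s)) :
    (Equiv.piSplitAt t (fun s => Option (X s))).symm (c, r) t = c := by
  simp [Equiv.piSplitAt]

lemma onestep (hμ0 : ∀ x, 0 ≤ μ x) (hα0 : 0 < α) (hα1 : α < 1)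
    (t : Fin k) (G : (∀ t, Option (X t)) → ℝ) :
    α * ∑ w : ∀ t, Option (X t), anchoredDist μ α w * G (Function.update w t none)
      = ∑ w : ∀ t, Option (X t), (if w t = none then anchoredDist μ α w * G w else 0) := by
  classical
  set ν := anchoredDist μ α with hν
  set e := Equiv.piSplitAt t (fun s => Option (X s)) with he
  have hsum : ∀ f : (∀ s, Option (X s)) → ℝ, ∑ w : ∀ t, Option (X t), f w = ∑ p, f (e.symm p) :=
    fun f => (Equiv.sum_comp e.symm f).symm
  rw [hsum (fun w => ν w * G (Function.update w t none)),
      hsum (fun w => if w t = none then ν w * G w else 0)]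
  rw [Fintype.sum_prod_type, Fintype.sum_prod_type]
  have lhs : ∀ r, ∑ c : Option (X t), ν (e.symm (c, r)) * G (Function.update (e.symm (c, r)) t none)
      = ∑ c : Option (X t), ν (Function.update (e.symm (none, r)) t c) * G (e.symm (none, r)) := by
    intro r
    refine Finset.sum_congr rfl fun c _ => ?_
    rw [piSplitAt_symm_update, ← piSplitAt_symm_update t (none : Option (X t)) c r]
  rw [Finset.sum_comm, Finset.mul_sum]
  rw [Finset.sum_comm (γ := Option (X t))]
  refine Finset.sum_congr rfl fun r _ => ?_
  rw [lhs r, ← Finset.sum_mul]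
  have hmarg : ∑ c : Option (X t), ν (Function.update (e.symm (none, r)) t c)
      = margMinus ν t (e.symm (none, r)) := rfl
  rw [hmarg]
  have : ∑ c : Option (X t), (if (e.symm (c, r)) t = none then ν (e.symm (c, r)) * G (e.symm (c, r)) else 0)
      = ν (e.symm (none, r)) * G (e.symm (none, r)) := by
    rw [Finset.sum_congr rfl (fun c _ => by rw [piSplitAt_symm_same])]
    rw [Finset.sum_ite_eq' Finset.univ (none : Option (X t))
      (fun c => ν (e.symm (c, r)) * G (e.symm (c, r)))]
    simp
  rw [this, ← mul_assoc, mul_comm α (margMinus ν t (e.symm (none, r))), mul_assoc]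
  have : α * margMinus ν t (e.symm (none, r)) = ν (e.symm (none, r)) := by
    rw [← anchored_update_none t (e.symm (none, r)), piSplitAt_symm_update]
  rw [mul_comm (margMinus ν t (e.symm (none, r))) (α * G (e.symm (none, r)))]
  rw [mul_comm α (G (e.symm (none, r))), mul_assoc, this, mul_comm]

end Step


def Tm {k : ℕ} {X : Fin k → Type*} (j : ℕ) (w : ∀ t, Option (X t)) : ∀ t, Option (X t) :=
  fun s => if (s : ℕ) < j then none else w s

def Dn {k : ℕ} {X : Fin k → Type*} (j : ℕ) (w : ∀ t, Option (X t)) : ∀ t, Option (X t) :=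
  fun s => if (s : ℕ) = j then none else w s

section TmDn
variable {k : ℕ} {X : Fin k → Type*}

lemma Tm_zero (w : ∀ t, Option (X t)) : Tm 0 w = w := by
  funext s; simp [Tm]

lemma Tm_top (w : ∀ t, Option (X t)) : Tm k w = fun _ => none := by
  funext s; simp [Tm, s.isLt]

lemma Tm_succ (j : ℕ) (w : ∀ t, Option (X t)) : Tm (j + 1) w = Dn j (Tm j w) := by
  funext s; simp only [Tm, Dn]; split_ifs <;> first | rfl | omega

lemma Tm_succ' (j : ℕ) (w : ∀ t, Option (X t)) : Tm (j + 1) w = Tm j (Dn j w) := by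
  funext s; simp only [Tm, Dn]; split_ifs <;> first | rfl | omega

lemma Dn_eq_update [∀ t, DecidableEq (X t)] {j : ℕ} (hj : j < k) (w : ∀ t, Option (X t)) :
    Dn j w = Function.update w ⟨j, hj⟩ none := by
  funext s
  rcases eq_or_ne (s : ℕ) j with h | h
  · have : s = ⟨j, hj⟩ := Fin.ext h
    subst this
    simp [Dn, Function.update_self]
  · have hs : s ≠ ⟨j, hj⟩ := fun hh => h (by rw [hh])
    rw [Function.update_of_ne hs]
    simp [Dn, h]

lemma Dn_eq_self_of_none {j : ℕ} {w : ∀ t, Option (X t)} (hj : j < k)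
    (h : w ⟨j, hj⟩ = none) : Dn j w = w := by
  funext s
  rcases eq_or_ne (s : ℕ) j with hh | hh
  · have : s = ⟨j, hj⟩ := Fin.ext hh
    subst this
    simpa [Dn, hh] using h.symm
  · simp [Dn, hh]

end TmDn

section Collapse
variable {k : ℕ} {X : Fin k → Type*} [∀ t, Fintype (X t)] [∀ t, DecidableEq (X t)]
variable {μ : (∀ t, X t) → ℝ} {α : ℝ}

lemma collapse (hμ0 : ∀ x, 0 ≤ μ x) (hα0 : 0 < α) (hα1 : α < 1) :
    ∀ j, j ≤ k → ∀ F : (∀ t, Option (X t)) → ℝ, (∀ u, 0 ≤ F u) →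
      α ^ j * ∑ w, anchoredDist μ α w * F (Tm j w)
        ≤ ∑ w, anchoredDist μ α w * F w := by
  have hν0 : ∀ w, 0 ≤ anchoredDist μ α w := anchored_nonneg hμ0 hα0.le hα1.le
  intro j
  induction j with
  | zero =>
    intro _ F _
    rw [pow_zero, one_mul]
    apply le_of_eq
    exact Finset.sum_congr rfl fun w _ => by rw [Tm_zero]
  | succ j ih =>
    intro hjk F hF
    have hj : j < k := hjk
    calc α ^ (j + 1) * ∑ w, anchoredDist μ α w * F (Tm (j + 1) w)
        = α ^ j * (α * ∑ w, anchoredDist μ α w *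
            ((fun u => F (Tm j u)) (Function.update w ⟨j, hj⟩ none))) := by
          rw [pow_succ]
          rw [Finset.sum_congr rfl fun w _ => by
            rw [show Tm (j+1) w = Tm j (Function.update w ⟨j, hj⟩ none) by
              rw [Tm_succ', Dn_eq_update hj]]]
          ring
      _ = α ^ j * ∑ w, (if w ⟨j, hj⟩ = none
            then anchoredDist μ α w * F (Tm j w) else 0) := by
          rw [onestep hμ0 hα0 hα1 ⟨j, hj⟩ (fun u => F (Tm j u))]
      _ ≤ α ^ j * ∑ w, anchoredDist μ α w * F (Tm j w) := by
          apply mul_le_mul_of_nonneg_left _ (pow_nonneg hα0.le j)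
          apply Finset.sum_le_sum
          intro w _
          split_ifs
          · exact le_refl _
          · exact mul_nonneg (hν0 w) (hF _)
      _ ≤ ∑ w, anchoredDist μ α w * F w := ih hj.le F hF

lemma nu_mul_condProb_none (hμ0 : ∀ x, 0 ≤ μ x) (hα0 : 0 < α) (hα1 : α < 1)
    (t : Fin k) (w : ∀ t, Option (X t)) :
    anchoredDist μ α w * condProb (anchoredDist μ α) t w none
      = α * anchoredDist μ α w := by
  have hν0 : ∀ w, 0 ≤ anchoredDist μ α w := anchored_nonneg hμ0 hα0.le hα1.le
  by_cases hm : 0 < margMinus (anchoredDist μ α) t w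
  · unfold condProb
    rw [if_pos hm, anchored_update_none, mul_div_assoc, div_self (ne_of_gt hm), mul_one]
    ring
  · rw [mu_eq_zero_of_marg hν0 hm, zero_mul, mul_zero]

lemma connRho_edge (hμ0 : ∀ x, 0 ≤ μ x) (hα0 : 0 < α) (hα1 : α < 1)
    (t : Fin k) (w : ∀ t, Option (X t)) (h : w t ≠ none) :
    connRho (anchoredDist μ α) w (Function.update w t none)
      = (k : ℝ)⁻¹ * (α * anchoredDist μ α w) := by
  classical
  have hν0 : ∀ w, 0 ≤ anchoredDist μ α w := anchored_nonneg hμ0 hα0.le hα1.le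
  have hne : w ≠ Function.update w t none := by
    intro he
    apply h
    have := congrFun he t
    rwa [Function.update_self] at this
  unfold connRho
  rw [if_neg hne]
  congr 1
  rw [Finset.sum_eq_single t]
  · rw [if_pos (fun s (hs : s ≠ t) => (Function.update_of_ne (β := fun t => Option (X t)) hs none w).symm)]
    rw [mul_assoc, Function.update_self]
    rw [← mul_assoc, margMinus_mul_condProb hν0, Function.update_eq_self]
    exact nu_mul_condProb_none hμ0 hα0 hα1 t w
  · intro t' _ hne'
    rw [if_neg]
    intro hcontra
    apply h
    have := hcontra t (Ne.symm hne')
    rwa [Function.update_self] at this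
  · intro habs
    exact absurd (Finset.mem_univ t) habs

end Collapse


section Geo
open RealInnerProductSpace

variable {W : Type*} [Fintype W] {E : Type*} [NormedAddCommGroup E] [InnerProductSpace ℝ E]

lemma var_min (d : W → ℝ) (hd : ∑ u, d u = 1) (g : W → E) (p : E) :
    ∑ u, d u * ‖g u - (∑ u, d u • g u)‖ ^ 2 ≤ ∑ u, d u * ‖g u - p‖ ^ 2 := by
  set m : E := ∑ u, d u • g u with hm
  have hzero : ∑ u, d u • (g u - m) = 0 := by
    simp only [smul_sub]
    rw [Finset.sum_sub_distrib, ← Finset.sum_smul, hd, one_smul, ← hm, sub_self]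
  have expand : ∀ u, ‖g u - p‖ ^ 2
      = ‖g u - m‖ ^ 2 + (2 * ⟪g u - m, m - p⟫ + ‖m - p‖ ^ 2) := by
    intro u
    have : g u - p = (g u - m) + (m - p) := by abel
    rw [this, norm_add_sq_real]
    ring
  calc ∑ u, d u * ‖g u - m‖ ^ 2
      ≤ ∑ u, d u * ‖g u - m‖ ^ 2 + ‖m - p‖ ^ 2 := le_add_of_nonneg_right (sq_nonneg _)
    _ = ∑ u, d u * ‖g u - p‖ ^ 2 := by
        rw [Finset.sum_congr rfl fun u _ => congrArg (d u * ·) (expand u)]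
        have h1 : ∑ u, d u * (‖g u - m‖ ^ 2 + (2 * ⟪g u - m, m - p⟫ + ‖m - p‖ ^ 2))
            = ∑ u, d u * ‖g u - m‖ ^ 2 + (2 * ∑ u, ⟪d u • (g u - m), m - p⟫
              + (∑ u, d u) * ‖m - p‖ ^ 2) := by
          rw [Finset.mul_sum, Finset.sum_mul, ← Finset.sum_add_distrib,
            ← Finset.sum_add_distrib]
          refine Finset.sum_congr rfl fun u _ => ?_
          rw [real_inner_smul_left]
          ring
        rw [h1, ← sum_inner, hzero, inner_zero_left, hd]
        ring

lemma cs_sum (n : ℕ) (v : ℕ → E) (c : ℕ → ℝ) (hc : ∀ i, 0 < c i) :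
    ‖∑ i ∈ Finset.range n, v i‖ ^ 2
      ≤ (∑ i ∈ Finset.range n, c i) * ∑ i ∈ Finset.range n, (c i)⁻¹ * ‖v i‖ ^ 2 := by
  have h1 : ‖∑ i ∈ Finset.range n, v i‖ ^ 2 ≤ (∑ i ∈ Finset.range n, ‖v i‖) ^ 2 :=
    pow_le_pow_left₀ (norm_nonneg _) (norm_sum_le _ _) 2
  refine h1.trans ?_
  have h2 : ∀ i, ‖v i‖ = Real.sqrt (c i) * (Real.sqrt (c i)⁻¹ * ‖v i‖) := by
    intro i
    rw [← mul_assoc, ← Real.sqrt_mul (hc i).le, mul_inv_cancel₀ (hc i).ne', Real.sqrt_one,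
      one_mul]
  rw [Finset.sum_congr rfl fun i _ => h2 i]
  refine (Finset.sum_mul_sq_le_sq_mul_sq _ _ _).trans (le_of_eq ?_)
  congr 1
  · exact Finset.sum_congr rfl fun i _ => Real.sq_sqrt (hc i).le
  · refine Finset.sum_congr rfl fun i _ => ?_
    rw [mul_pow, Real.sq_sqrt (inv_nonneg.2 (hc i).le)]

end Geo


section Energy
variable {k : ℕ} {X : Fin k → Type*} [∀ t, Fintype (X t)] [∀ t, DecidableEq (X t)]
variable {μ : (∀ t, X t) → ℝ} {α : ℝ}

lemma steps_le_energy (ρ : (∀ t, Option (X t)) → (∀ t, Option (X t)) → ℝ)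
    (hρ : ∀ u v, 0 ≤ ρ u v) {r : ℕ} (g : (∀ t, Option (X t)) → EuclideanSpace ℝ (Fin r)) :
    ∑ i ∈ Finset.range k, ∑ u, ρ u (Dn i u) * ‖g u - g (Dn i u)‖ ^ 2
      ≤ dirichletEnergy ρ g := by
  classical
  rw [dirichletEnergy, Finset.sum_comm]
  apply Finset.sum_le_sum
  intro u _
  rw [← Finset.sum_filter_add_sum_filter_not (Finset.range k) (fun i => Dn i u ≠ u)]
  have hz : ∑ i ∈ (Finset.range k).filter (fun i => ¬ Dn i u ≠ u),
      ρ u (Dn i u) * ‖g u - g (Dn i u)‖ ^ 2 = 0 := by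
    apply Finset.sum_eq_zero
    intro i hi
    have : Dn i u = u := not_not.1 (Finset.mem_filter.1 hi).2
    rw [this, sub_self, norm_zero, zero_pow two_ne_zero, mul_zero]
  rw [hz, add_zero]
  have hinj : ∀ i ∈ (Finset.range k).filter (fun i => Dn i u ≠ u),
      ∀ i' ∈ (Finset.range k).filter (fun i => Dn i u ≠ u),
      Dn i u = Dn i' u → i = i' := by
    intro i hi i' hi' h
    simp only [Finset.mem_filter, Finset.mem_range] at hi hi'
    by_contra hne
    have hik : i < k := hi.1
    have h1 : Dn i u ⟨i, hik⟩ = none := by simp [Dn]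
    have h2 : Dn i' u ⟨i, hik⟩ = u ⟨i, hik⟩ := by simp [Dn, hne]
    have hun : u ⟨i, hik⟩ = none := by rw [← h2, ← h, h1]
    exact hi.2 (Dn_eq_self_of_none hik hun)
  have himg : ∑ v ∈ ((Finset.range k).filter (fun i => Dn i u ≠ u)).image (fun i => Dn i u),
      ρ u v * ‖g u - g v‖ ^ 2
      = ∑ i ∈ (Finset.range k).filter (fun i => Dn i u ≠ u),
        ρ u (Dn i u) * ‖g u - g (Dn i u)‖ ^ 2 := Finset.sum_image hinj
  rw [← himg]
  exact Finset.sum_le_sum_of_subset_of_nonneg (Finset.subset_univ _)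
    (fun v _ _ => mul_nonneg (hρ u v) (sq_nonneg _))

lemma step_bound (hk : 0 < k) (hμ0 : ∀ x, 0 ≤ μ x) (hα0 : 0 < α) (hα1 : α < 1)
    {r : ℕ} (g : (∀ t, Option (X t)) → EuclideanSpace ℝ (Fin r)) {i : ℕ} (hi : i < k) :
    α ^ (i + 1) * ∑ w, anchoredDist μ α w * ‖g (Tm i w) - g (Tm (i + 1) w)‖ ^ 2
      ≤ k * ∑ u, connRho (anchoredDist μ α) u (Dn i u) * ‖g u - g (Dn i u)‖ ^ 2 := by
  have hkR : (k : ℝ) ≠ 0 := Nat.cast_ne_zero.2 hk.ne'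
  have h1 : ∀ w : ∀ t, Option (X t), ‖g (Tm i w) - g (Tm (i + 1) w)‖ ^ 2
      = ‖g (Tm i w) - g (Dn i (Tm i w))‖ ^ 2 := fun w => by rw [← Tm_succ]
  have h2 : α ^ i * ∑ w, anchoredDist μ α w * ‖g (Tm i w) - g (Dn i (Tm i w))‖ ^ 2
      ≤ ∑ u, anchoredDist μ α u * ‖g u - g (Dn i u)‖ ^ 2 :=
    collapse hμ0 hα0 hα1 i hi.le (fun u => ‖g u - g (Dn i u)‖ ^ 2) (fun u => sq_nonneg _)
  have h3 : ∀ u, α * (anchoredDist μ α u * ‖g u - g (Dn i u)‖ ^ 2)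
      = k * (connRho (anchoredDist μ α) u (Dn i u) * ‖g u - g (Dn i u)‖ ^ 2) := by
    intro u
    by_cases hu : u ⟨i, hi⟩ = none
    · rw [Dn_eq_self_of_none hi hu, sub_self, norm_zero, zero_pow two_ne_zero,
        mul_zero, mul_zero, mul_zero, mul_zero]
    · rw [Dn_eq_update hi, connRho_edge hμ0 hα0 hα1 ⟨i, hi⟩ u hu]
      field_simp
  calc α ^ (i + 1) * ∑ w, anchoredDist μ α w * ‖g (Tm i w) - g (Tm (i + 1) w)‖ ^ 2
      = α * (α ^ i * ∑ w, anchoredDist μ α w * ‖g (Tm i w) - g (Dn i (Tm i w))‖ ^ 2) := by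
        rw [Finset.sum_congr rfl fun w _ => by rw [h1 w]]
        rw [pow_succ]
        ring
    _ ≤ α * ∑ u, anchoredDist μ α u * ‖g u - g (Dn i u)‖ ^ 2 :=
        mul_le_mul_of_nonneg_left h2 hα0.le
    _ = k * ∑ u, connRho (anchoredDist μ α) u (Dn i u) * ‖g u - g (Dn i u)‖ ^ 2 := by
        rw [Finset.mul_sum, Finset.mul_sum]
        exact Finset.sum_congr rfl fun u _ => h3 u

end Energy


/-- Eigenvalue bound for anchored games: for `0 < α < 1/2`, the second-smallest normalized
Laplacian eigenvalue of the `(k-1)`-connection graph of the `α`-anchored game satisfies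
`λ(H) ≥ α^k/(8k)`. -/
theorem anchored_eigenvalue_bound {k : ℕ} {X : Fin k → Type*} [∀ t, Fintype (X t)]
    [∀ t, DecidableEq (X t)] (hk : 0 < k)
    (μ : (∀ t, X t) → ℝ) (hμ0 : ∀ x, 0 ≤ μ x) (hμ1 : ∑ x, μ x = 1)
    (α : ℝ) (hα0 : 0 < α) (hα : α < 1 / 2) :
    α ^ k / (8 * k) ≤ lamH (connRho (anchoredDist μ α)) := by
  classical
  have hα1 : α < 1 := hα.trans (by norm_num)
  set ν : (∀ t, Option (X t)) → ℝ := anchoredDist μ α with hνdef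
  have hν0 : ∀ w, 0 ≤ ν w := anchored_nonneg hμ0 hα0.le hα1.le
  have hν1 : ∑ w, ν w = 1 := anchored_sum hμ1
  set ρ : (∀ t, Option (X t)) → (∀ t, Option (X t)) → ℝ := connRho ν with hρdef
  have hρ0 : ∀ u v, 0 ≤ ρ u v := connRho_nonneg hν0
  have hvw : ∀ w, vertexWeight ρ w = ν w := vertexWeight_connRho hk hν0
  have hkR : (0 : ℝ) < k := Nat.cast_pos.2 hk
  have hkR' : (k : ℝ) ≠ 0 := hkR.ne'
  set b : ∀ t, Option (X t) := fun _ => none with hbdef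
  have hbot : ν b = α ^ k := anchored_bot hμ1
  have hak : 0 < α ^ k := pow_pos hα0 k
  have hak1 : α ^ k < 1 := pow_lt_one₀ hα0.le hα1 hk.ne'
  unfold lamH
  apply le_csInf
  · -- the set is nonempty
    set g0 : (∀ t, Option (X t)) → EuclideanSpace ℝ (Fin 1) :=
      fun u => if u = b then (WithLp.toLp 2 (fun _ => 1) : EuclideanSpace ℝ (Fin 1)) else 0 with hg0def
    have hvar0 : varianceH ρ g0 ≠ 0 := by
      intro h0
      unfold varianceH at h0
      have hterm : ∀ u, ν u ≠ 0 → g0 u = gbar ρ g0 := by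
        intro u hu
        have hnn : ∀ v ∈ Finset.univ, 0 ≤ vertexWeight ρ v * ‖g0 v - gbar ρ g0‖ ^ 2 :=
          fun v _ => mul_nonneg (hvw v ▸ hν0 v) (sq_nonneg _)
        have hzz := (Finset.sum_eq_zero_iff_of_nonneg hnn).1 h0 u (Finset.mem_univ u)
        rw [hvw u] at hzz
        rcases mul_eq_zero.1 hzz with h | h
        · exact absurd h hu
        · have hnorm : ‖g0 u - gbar ρ g0‖ = 0 := pow_eq_zero_iff two_ne_zero |>.1 h
          rw [norm_eq_zero, sub_eq_zero] at hnorm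
          exact hnorm
      have hb1 : g0 b = gbar ρ g0 := hterm b (by rw [hbot]; exact hak.ne')
      obtain ⟨u, humem, hu⟩ : ∃ u ∈ Finset.univ.erase b, ν u ≠ 0 := by
        by_contra hall
        push_neg at hall
        have hz : ∑ u ∈ Finset.univ.erase b, ν u = 0 := Finset.sum_eq_zero hall
        have h1 : (1 : ℝ) = α ^ k := by
          rw [← hν1, ← Finset.sum_erase_add _ _ (Finset.mem_univ b), hz, zero_add, hbot]
        exact absurd h1.symm (ne_of_lt hak1)
      have hb2 : g0 u = gbar ρ g0 := hterm u hu
      have he : g0 b = (WithLp.toLp 2 (fun _ => 1) : EuclideanSpace ℝ (Fin 1)) := if_pos rfl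
      have hz0 : g0 u = 0 := if_neg (Finset.ne_of_mem_erase humem)
      have hcon : (WithLp.toLp 2 (fun _ => 1) : EuclideanSpace ℝ (Fin 1)) = 0 := by
        rw [← he, hb1, ← hb2, hz0]
      have := congrArg (fun v : EuclideanSpace ℝ (Fin 1) => v 0) hcon
      norm_num at this
    exact ⟨dirichletEnergy ρ g0 / varianceH ρ g0, 1, g0, hvar0, rfl⟩
  · rintro q ⟨r, g, hvar, rfl⟩
    have hvarnn : 0 ≤ varianceH ρ g :=
      Finset.sum_nonneg fun u _ => mul_nonneg (hvw u ▸ hν0 u) (sq_nonneg _)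
    have hvar' : 0 < varianceH ρ g := lt_of_le_of_ne hvarnn (Ne.symm hvar)
    have hE0 : 0 ≤ dirichletEnergy ρ g :=
      Finset.sum_nonneg fun u _ => Finset.sum_nonneg fun v _ =>
        mul_nonneg (hρ0 u v) (sq_nonneg _)
    set C : ℝ := ∑ i ∈ Finset.range k, (α ^ (i + 1))⁻¹ with hCdef
    have hC0 : 0 ≤ C :=
      Finset.sum_nonneg fun i _ => inv_nonneg.2 (pow_nonneg hα0.le _)
    -- Step A : variance is at most the second moment around g b
    have stepA : varianceH ρ g ≤ ∑ u, ν u * ‖g u - g b‖ ^ 2 := by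
      have hv : varianceH ρ g = ∑ u, ν u * ‖g u - (∑ u, ν u • g u)‖ ^ 2 := by
        unfold varianceH gbar
        simp only [hvw]
      rw [hv]
      exact var_min ν hν1 g (g b)
    -- Step B : Cauchy-Schwarz along the path
    have stepB : ∀ w, ‖g w - g b‖ ^ 2
        ≤ C * ∑ i ∈ Finset.range k, α ^ (i + 1) * ‖g (Tm i w) - g (Tm (i + 1) w)‖ ^ 2 := by
      intro w
      have tele : g w - g b = ∑ i ∈ Finset.range k, (g (Tm i w) - g (Tm (i + 1) w)) := by
        rw [Finset.sum_range_sub' (fun i => g (Tm i w)) k, Tm_zero, Tm_top]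
      rw [tele]
      have hcs := cs_sum k (fun i => g (Tm i w) - g (Tm (i + 1) w)) (fun i => (α ^ (i + 1))⁻¹)
        (fun i => inv_pos.2 (pow_pos hα0 _))
      simpa [inv_inv] using hcs
    -- combine
    have stepAB : varianceH ρ g ≤ C * ∑ i ∈ Finset.range k,
        α ^ (i + 1) * ∑ w, ν w * ‖g (Tm i w) - g (Tm (i + 1) w)‖ ^ 2 := by
      refine stepA.trans ?_
      have h1 : ∑ u, ν u * ‖g u - g b‖ ^ 2
          ≤ ∑ u, ν u * (C * ∑ i ∈ Finset.range k,
            α ^ (i + 1) * ‖g (Tm i u) - g (Tm (i + 1) u)‖ ^ 2) :=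
        Finset.sum_le_sum fun u _ => mul_le_mul_of_nonneg_left (stepB u) (hν0 u)
      refine h1.trans (le_of_eq ?_)
      simp only [Finset.mul_sum]
      rw [Finset.sum_comm]
      exact Finset.sum_congr rfl fun i _ => Finset.sum_congr rfl fun u _ => by ring
    -- Step C : per-step comparison with the energy
    have stepD : varianceH ρ g ≤ C * (k * dirichletEnergy ρ g) := by
      refine stepAB.trans (mul_le_mul_of_nonneg_left ?_ hC0)
      have h2 : ∑ i ∈ Finset.range k,
          α ^ (i + 1) * ∑ w, ν w * ‖g (Tm i w) - g (Tm (i + 1) w)‖ ^ 2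
          ≤ ∑ i ∈ Finset.range k, (k : ℝ) * ∑ u, ρ u (Dn i u) * ‖g u - g (Dn i u)‖ ^ 2 :=
        Finset.sum_le_sum fun i hi =>
          step_bound hk hμ0 hα0 hα1 g (Finset.mem_range.1 hi)
      refine h2.trans ?_
      rw [← Finset.mul_sum]
      exact mul_le_mul_of_nonneg_left (steps_le_energy ρ hρ0 g) hkR.le
    -- numeric bound on C
    have hCb : C * α ^ k ≤ 2 := by
      have hCa : C * α ^ k = ∑ i ∈ Finset.range k, α ^ (k - (i + 1)) := by
        rw [Finset.sum_mul]
        refine Finset.sum_congr rfl fun i hi => ?_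
        rw [pow_sub₀ α hα0.ne' (Finset.mem_range.1 hi)]
        exact mul_comm _ _
      have hre : ∑ i ∈ Finset.range k, α ^ (k - (i + 1)) = ∑ i ∈ Finset.range k, α ^ i := by
        rw [show (fun i => α ^ (k - (i + 1))) = fun i => α ^ (k - 1 - i) by
          funext i; congr 1; omega]
        exact Finset.sum_range_reflect (fun j => α ^ j) k
      have hgeom : (∑ i ∈ Finset.range k, α ^ i) * (α - 1) = α ^ k - 1 := geom_sum_mul α k
      have hsnn : 0 ≤ ∑ i ∈ Finset.range k, α ^ i :=
        Finset.sum_nonneg fun i _ => pow_nonneg hα0.le _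
      rw [hCa, hre]
      nlinarith [hak]
    have hC2 : C ≤ 2 / α ^ k := (le_div_iff₀ hak).2 hCb
    -- finish
    rw [le_div_iff₀ hvar']
    have h5 : varianceH ρ g ≤ 2 / α ^ k * (k * dirichletEnergy ρ g) :=
      stepD.trans (mul_le_mul_of_nonneg_right hC2 (by positivity))
    calc α ^ k / (8 * k) * varianceH ρ g
        ≤ α ^ k / (8 * k) * (2 / α ^ k * (k * dirichletEnergy ρ g)) :=
          mul_le_mul_of_nonneg_left h5 (by positivity)
      _ = dirichletEnergy ρ g / 4 := by field_simp; ring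
      _ ≤ dirichletEnergy ρ g := by linarith
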